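/- Let (f_n)_{n∈ℤ} be an M-periodic sequence in X. Then for every integer k with 1 ≤ k ≤ M−1, ‖D^k f‖_0 ≤ ‖D^{k−1} f‖_0^{1/2} · ‖D^{k+1} f‖_0^{1/2}. -/

import Mathlib

open scoped RealInnerProductSpace

noncomputable def cA : ℝ := Real.sqrt (2 + Real.sqrt 2 / 2)

/-- backward difference quotient of a bi-infinite sequence. -/
noncomputable def DqZ {X : Type*} [NormedAddCommGroup X] [NormedSpace ℝ X] (τ : ℝ) (f : ℤ → X) : ℤ → X :=
  fun n => τ⁻¹ • (f n - f (n - 1))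

/-- discrete `L²` norm `(τ Σ_{n=1}^{M} ‖f n‖²)^{1/2}` over one period. -/
noncomputable def seqNorm0Z {X : Type*} [NormedAddCommGroup X]
    (τ : ℝ) (M : ℕ) (f : ℤ → X) : ℝ :=
  Real.sqrt (τ * ∑ n ∈ Finset.Icc (1:ℤ) (M:ℤ), ‖f n‖^2)

/-- A shifted sum of a periodic function over one period equals the unshifted sum. -/
lemma shift_sum_per (M : ℕ) (hM : 0 < M) (g : ℤ → ℝ) (hg : ∀ n : ℤ, g (n + M) = g n) :
    ∑ n ∈ Finset.Icc (1:ℤ) (M:ℤ), g (n - 1) = ∑ n ∈ Finset.Icc (1:ℤ) (M:ℤ), g n := by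
  have hmap : Finset.Icc (0:ℤ) ((M:ℤ)-1) =
      (Finset.Icc (1:ℤ) (M:ℤ)).map ⟨fun x => x - 1, fun a b h => by simpa using h⟩ := by
    ext x
    simp only [Finset.mem_map, Finset.mem_Icc, Function.Embedding.coeFn_mk]
    constructor
    · rintro ⟨h1, h2⟩; exact ⟨x + 1, ⟨by omega, by omega⟩, by show x + 1 - 1 = x; ring⟩
    · rintro ⟨a, ⟨h1, h2⟩, rfl⟩; show 0 ≤ a - 1 ∧ a - 1 ≤ (M:ℤ) - 1; omega
  have h1 : ∑ n ∈ Finset.Icc (1:ℤ) (M:ℤ), g (n - 1)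
      = ∑ n ∈ Finset.Icc (0:ℤ) ((M:ℤ)-1), g n := by
    rw [hmap, Finset.sum_map]; rfl
  have h2 : ∑ n ∈ Finset.Icc (0:ℤ) ((M:ℤ)-1), g n
      = g 0 + ∑ n ∈ Finset.Icc (1:ℤ) ((M:ℤ)-1), g n := by
    rw [Finset.Icc_eq_cons_Ioc (by omega : (0:ℤ) ≤ (M:ℤ)-1), Finset.sum_cons]
    congr 2
    ext x; simp [Finset.mem_Icc, Finset.mem_Ioc]; omega
  have h3 : ∑ n ∈ Finset.Icc (1:ℤ) (M:ℤ), g n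
      = g M + ∑ n ∈ Finset.Icc (1:ℤ) ((M:ℤ)-1), g n := by
    rw [Finset.Icc_eq_cons_Ico (by omega : (1:ℤ) ≤ (M:ℤ)), Finset.sum_cons]
    congr 2
    ext x; simp [Finset.mem_Icc, Finset.mem_Ico]
  have h0 : g (M:ℤ) = g 0 := by have := hg 0; simpa using this
  rw [h1, h2, h3, h0]

/-- `DqZ` preserves `M`-periodicity. -/
lemma per_DqZ {X : Type*} [NormedAddCommGroup X] [NormedSpace ℝ X]
    (τ : ℝ) (M : ℕ) (f : ℤ → X) (h : ∀ n : ℤ, f (n + M) = f n) :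
    ∀ n : ℤ, DqZ τ f (n + M) = DqZ τ f n := by
  intro n
  have h1 : f (n + (M:ℤ) - 1) = f (n - 1) := by
    have := h (n - 1); rwa [show n - 1 + (M:ℤ) = n + (M:ℤ) - 1 by ring] at this
  simp only [DqZ, h n, h1]

lemma per_iter_DqZ {X : Type*} [NormedAddCommGroup X] [NormedSpace ℝ X]
    (τ : ℝ) (M : ℕ) (f : ℤ → X) (h : ∀ n : ℤ, f (n + M) = f n) (k : ℕ) :
    ∀ n : ℤ, (DqZ τ)^[k] f (n + M) = (DqZ τ)^[k] f n := by
  induction k with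
  | zero => simpa using h
  | succ m ih =>
      intro n
      rw [Function.iterate_succ_apply']
      exact per_DqZ τ M _ ih n

/-- Lemma 4.2: discrete integration by parts for an M-periodic sequence:
`‖Dᵏf‖₀ ≤ ‖D^{k−1}f‖₀^{1/2} ‖D^{k+1}f‖₀^{1/2}` for `1 ≤ k ≤ M−1`. -/
theorem periodic_interpolation_step
    {X : Type*} [NormedAddCommGroup X] [InnerProductSpace ℝ X] [CompleteSpace X]
    (T : ℝ) (hT : 0 < T) (M : ℕ) (hM : 0 < M) (τ : ℝ) (hτ : τ = T / M)
    (f : ℤ → X) (hper : ∀ n : ℤ, f (n + M) = f n)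
    (k : ℕ) (hk : 1 ≤ k) (hkM : k + 1 ≤ M) :
    seqNorm0Z τ M ((DqZ τ)^[k] f) ≤
      (seqNorm0Z τ M ((DqZ τ)^[k-1] f)) ^ ((1:ℝ)/2) *
      (seqNorm0Z τ M ((DqZ τ)^[k+1] f)) ^ ((1:ℝ)/2) := by
  have hτ0 : 0 < τ := by rw [hτ]; positivity
  set a := (DqZ τ)^[k-1] f with ha
  set b := DqZ τ a with hbdef
  set c := DqZ τ b with hcdef
  have hb : (DqZ τ)^[k] f = b := by
    rw [hbdef, ha]
    conv_lhs => rw [show k = (k-1)+1 by omega]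
    rw [Function.iterate_succ_apply']
  have hc : (DqZ τ)^[k+1] f = c := by
    rw [hcdef, hbdef, ha]
    conv_lhs => rw [show k+1 = ((k-1)+1)+1 by omega]
    rw [Function.iterate_succ_apply', Function.iterate_succ_apply']
  have hpera : ∀ n : ℤ, a (n + M) = a n := per_iter_DqZ τ M f hper (k-1)
  have hperb : ∀ n : ℤ, b (n + M) = b n := per_DqZ τ M a hpera
  have hperc : ∀ n : ℤ, c (n + M) = c n := per_DqZ τ M b hperb
  set s : Finset ℤ := Finset.Icc (1:ℤ) (M:ℤ) with hs
  set A := ∑ n ∈ s, ‖a n‖^2 with hA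
  set B := ∑ n ∈ s, ‖b n‖^2 with hBdef
  set C := ∑ n ∈ s, ‖c n‖^2 with hC
  have hA0 : 0 ≤ A := Finset.sum_nonneg fun n _ => by positivity
  have hC0 : 0 ≤ C := Finset.sum_nonneg fun n _ => by positivity
  -- summation by parts
  have hB : B = -∑ n ∈ s, ⟪a n, c (n + 1)⟫ := by
    have e1 : ∀ n : ℤ, ‖b n‖^2 = τ⁻¹ * ⟪a n, b n⟫ - τ⁻¹ * ⟪a (n - 1), b n⟫ := by
      intro n
      have : ‖b n‖^2 = ⟪b n, b n⟫ := (real_inner_self_eq_norm_sq _).symm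
      rw [this]
      nth_rewrite 1 [hbdef]
      simp only [DqZ, real_inner_smul_left, inner_sub_left]
      ring
    have e2 : ∑ n ∈ s, ⟪a (n - 1), b n⟫ = ∑ n ∈ s, ⟪a n, b (n + 1)⟫ := by
      have hgper : ∀ n : ℤ, (fun x => (⟪a x, b (x + 1)⟫ : ℝ)) (n + M)
          = (fun x => (⟪a x, b (x + 1)⟫ : ℝ)) n := by
        intro n
        show (⟪a (n + M), b (n + M + 1)⟫ : ℝ) = ⟪a n, b (n + 1)⟫
        rw [show n + (M:ℤ) + 1 = (n + 1) + (M:ℤ) by ring, hpera, hperb]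
      have hsh := shift_sum_per M hM (fun x => (⟪a x, b (x + 1)⟫ : ℝ)) hgper
      rw [hs, ← hsh]
      apply Finset.sum_congr rfl
      intro n _
      have hn : n - 1 + 1 = n := by ring
      simp only [hn]
    have e3 : ∀ n : ℤ, τ⁻¹ * ⟪a n, b n⟫ - τ⁻¹ * ⟪a n, b (n + 1)⟫ = -⟪a n, c (n + 1)⟫ := by
      intro n
      have : c (n + 1) = τ⁻¹ • (b (n + 1) - b n) := by
        rw [hcdef]; simp only [DqZ]; rw [show n + 1 - 1 = n by ring]
      rw [this, real_inner_smul_right, inner_sub_right]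
      ring
    calc B = ∑ n ∈ s, (τ⁻¹ * ⟪a n, b n⟫ - τ⁻¹ * ⟪a (n - 1), b n⟫) := by
            rw [hBdef]; exact Finset.sum_congr rfl fun n _ => e1 n
      _ = τ⁻¹ * ∑ n ∈ s, ⟪a n, b n⟫ - τ⁻¹ * ∑ n ∈ s, ⟪a (n - 1), b n⟫ := by
            rw [Finset.sum_sub_distrib, Finset.mul_sum, Finset.mul_sum]
      _ = τ⁻¹ * ∑ n ∈ s, ⟪a n, b n⟫ - τ⁻¹ * ∑ n ∈ s, ⟪a n, b (n + 1)⟫ := by rw [e2]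
      _ = ∑ n ∈ s, (τ⁻¹ * ⟪a n, b n⟫ - τ⁻¹ * ⟪a n, b (n + 1)⟫) := by
            rw [Finset.sum_sub_distrib, Finset.mul_sum, Finset.mul_sum]
      _ = ∑ n ∈ s, -⟪a n, c (n + 1)⟫ := Finset.sum_congr rfl fun n _ => e3 n
      _ = -∑ n ∈ s, ⟪a n, c (n + 1)⟫ := by rw [Finset.sum_neg_distrib]
  -- Cauchy-Schwarz
  set S := ∑ n ∈ s, ‖a n‖ * ‖c (n + 1)‖ with hSdef
  have hS0 : 0 ≤ S := Finset.sum_nonneg fun n _ => by positivity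
  have hBS : B ≤ S := by
    rw [hB, hSdef, ← Finset.sum_neg_distrib]
    apply Finset.sum_le_sum
    intro n _
    exact (neg_le_abs _).trans (abs_real_inner_le_norm _ _)
  have hCshift : ∑ n ∈ s, ‖c (n + 1)‖^2 = C := by
    have hgper : ∀ n : ℤ, (fun x => ‖c (x + 1)‖^2) (n + M) = (fun x => ‖c (x + 1)‖^2) n := by
      intro n
      show ‖c (n + M + 1)‖^2 = ‖c (n + 1)‖^2
      rw [show n + (M:ℤ) + 1 = (n + 1) + (M:ℤ) by ring, hperc]
    have hsh := shift_sum_per M hM (fun x => ‖c (x + 1)‖^2) hgper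
    rw [hC, hs, ← hsh]
    apply Finset.sum_congr rfl
    intro n _
    have hn : n - 1 + 1 = n := by ring
    simp only [hn]
  have hCS : S^2 ≤ A * C := by
    have := Finset.sum_mul_sq_le_sq_mul_sq s (fun n => ‖a n‖) (fun n => ‖c (n + 1)‖)
    calc S^2 ≤ (∑ n ∈ s, ‖a n‖^2) * ∑ n ∈ s, ‖c (n + 1)‖^2 := this
      _ = A * C := by rw [hCshift, ← hA]
  have hSAC : S ≤ Real.sqrt A * Real.sqrt C := by
    have : S = Real.sqrt (S^2) := (Real.sqrt_sq hS0).symm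
    rw [this, ← Real.sqrt_mul hA0]
    exact Real.sqrt_le_sqrt hCS
  have hBAC : B ≤ Real.sqrt A * Real.sqrt C := hBS.trans hSAC
  -- conclude
  have key : τ * B ≤ Real.sqrt (τ * A) * Real.sqrt (τ * C) := by
    have : Real.sqrt (τ * A) * Real.sqrt (τ * C)
        = τ * (Real.sqrt A * Real.sqrt C) := by
      rw [Real.sqrt_mul hτ0.le, Real.sqrt_mul hτ0.le]
      rw [show Real.sqrt τ * Real.sqrt A * (Real.sqrt τ * Real.sqrt C)
          = (Real.sqrt τ * Real.sqrt τ) * (Real.sqrt A * Real.sqrt C) by ring,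
        Real.mul_self_sqrt hτ0.le]
    rw [this]
    exact mul_le_mul_of_nonneg_left hBAC hτ0.le
  rw [hb, hc]
  show Real.sqrt (τ * B) ≤
    Real.sqrt (τ * A) ^ ((1:ℝ)/2) * Real.sqrt (τ * C) ^ ((1:ℝ)/2)
  rw [← Real.mul_rpow (Real.sqrt_nonneg _) (Real.sqrt_nonneg _),
    ← Real.sqrt_eq_rpow]
  exact Real.sqrt_le_sqrt key
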